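/- Assume in addition τ(θ) + τ''(θ) > 0 for all θ ∈ (0, π/2), and let a > 0, b > 0. Then for all θ₁, θ₂ ∈ (0, π/2): g(θ₁, a) + g(θ₂, b) ≥ g(θ_Y, a) + g(θ_Y, b), with equality if and only if θ₁ = θ_Y and θ₂ = θ_Y. -/

import Mathlib

open Real

section Aux

variable (τ τ' τ'' : ℝ → ℝ) (τbd : ℝ)

/-- Key one-variable lemma: strict minimum of `f θ = (τ θ - τbd cos θ)/sin θ` at `θY`. -/
lemma herring_key
    (hd1 : ∀ θ ∈ Set.Ioo (0 : ℝ) (π / 2), HasDerivAt τ (τ' θ) θ)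
    (hd2 : ∀ θ ∈ Set.Ioo (0 : ℝ) (π / 2), HasDerivAt τ' (τ'' θ) θ)
    (θY : ℝ) (hθY : θY ∈ Set.Ioo (0 : ℝ) (π / 2))
    (hHY : Real.cos θY * τ θY - Real.sin θY * τ' θY = τbd)
    (hstiff : ∀ θ ∈ Set.Ioo (0 : ℝ) (π / 2), 0 < τ θ + τ'' θ) :
    ∀ θ ∈ Set.Ioo (0 : ℝ) (π / 2), θ ≠ θY →
      (τ θY - τbd * Real.cos θY) / Real.sin θY
        < (τ θ - τbd * Real.cos θ) / Real.sin θ := by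
  set I := Set.Ioo (0 : ℝ) (π / 2) with hI
  have hsin : ∀ θ ∈ I, 0 < Real.sin θ := by
    intro θ hθ
    exact Real.sin_pos_of_pos_of_lt_pi hθ.1 (lt_trans hθ.2 (by linarith [Real.pi_pos]))
  set N : ℝ → ℝ := fun θ => τ' θ * Real.sin θ - τ θ * Real.cos θ + τbd with hN
  have hNd : ∀ θ ∈ I, HasDerivAt N ((τ θ + τ'' θ) * Real.sin θ) θ := by
    intro θ hθ
    have h := (((hd2 θ hθ).mul (Real.hasDerivAt_sin θ)).sub
      ((hd1 θ hθ).mul (Real.hasDerivAt_cos θ))).add_const τbd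
    refine h.congr_deriv ?_
    ring
  have hNmono : StrictMonoOn N I := by
    apply strictMonoOn_of_deriv_pos (convex_Ioo _ _)
    · intro θ hθ; exact (hNd θ hθ).continuousAt.continuousWithinAt
    · intro θ hθ
      rw [interior_Ioo] at hθ
      rw [(hNd θ hθ).deriv]
      exact mul_pos (hstiff θ hθ) (hsin θ hθ)
  have hNY : N θY = 0 := by simp only [hN]; linarith
  set f : ℝ → ℝ := fun θ => (τ θ - τbd * Real.cos θ) / Real.sin θ with hf
  have hfd : ∀ θ ∈ I, HasDerivAt f (N θ / (Real.sin θ) ^ 2) θ := by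
    intro θ hθ
    have hs := (hsin θ hθ).ne'
    have h := ((hd1 θ hθ).sub ((Real.hasDerivAt_cos θ).const_mul τbd)).div
      (Real.hasDerivAt_sin θ) hs
    refine h.congr_deriv ?_
    have hpyth := Real.sin_sq_add_cos_sq θ
    congr 1
    simp only [hN, Pi.sub_apply]
    linear_combination τbd * hpyth
  have hIco : Set.Ico θY (π / 2) ⊆ I := fun x hx => ⟨lt_of_lt_of_le hθY.1 hx.1, hx.2⟩
  have hIoc : Set.Ioc (0 : ℝ) θY ⊆ I := fun x hx => ⟨hx.1, lt_of_le_of_lt hx.2 hθY.2⟩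
  have hmono : StrictMonoOn f (Set.Ico θY (π / 2)) := by
    apply strictMonoOn_of_deriv_pos (convex_Ico _ _)
    · intro θ hθ; exact (hfd θ (hIco hθ)).continuousAt.continuousWithinAt
    · intro θ hθ
      rw [interior_Ico] at hθ
      have hθI : θ ∈ I := hIco ⟨le_of_lt hθ.1, hθ.2⟩
      rw [(hfd θ hθI).deriv]
      have hNpos : 0 < N θ := by
        have := hNmono hθY hθI hθ.1
        linarith [hNY]
      exact div_pos hNpos (pow_pos (hsin θ hθI) 2)
  have hanti : StrictAntiOn f (Set.Ioc (0 : ℝ) θY) := by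
    apply strictAntiOn_of_deriv_neg (convex_Ioc _ _)
    · intro θ hθ; exact (hfd θ (hIoc hθ)).continuousAt.continuousWithinAt
    · intro θ hθ
      rw [interior_Ioc] at hθ
      have hθI : θ ∈ I := hIoc ⟨hθ.1, le_of_lt hθ.2⟩
      rw [(hfd θ hθI).deriv]
      have hNneg : N θ < 0 := by
        have := hNmono hθI hθY hθ.2
        linarith [hNY]
      exact div_neg_of_neg_of_pos hNneg (pow_pos (hsin θ hθI) 2)
  intro θ hθ hne
  rcases lt_or_gt_of_ne hne with h | h
  · exact hanti ⟨hθ.1, le_of_lt h⟩ ⟨hθY.1, le_refl _⟩ h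
  · exact hmono ⟨le_refl _, hθY.2⟩ ⟨le_of_lt h, hθ.2⟩ h

end Aux

/-- Under positive stiffness, for `a, b > 0` the sum
`g(θ₁, a) + g(θ₂, b)` attains its minimum exactly at `θ₁ = θ₂ = θ_Y`. -/
theorem herring_young_sum_minimum
    (τ τ' τ'' : ℝ → ℝ) (τbd : ℝ)
    (hd1 : ∀ θ ∈ Set.Ioo (0 : ℝ) (π / 2), HasDerivAt τ (τ' θ) θ)
    (hd2 : ∀ θ ∈ Set.Ioo (0 : ℝ) (π / 2), HasDerivAt τ' (τ'' θ) θ)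
    (hc : ContinuousOn τ'' (Set.Ioo (0 : ℝ) (π / 2)))
    (θY : ℝ) (hθY : θY ∈ Set.Ioo (0 : ℝ) (π / 2))
    (hHY : Real.cos θY * τ θY - Real.sin θY * τ' θY = τbd)
    (hstiff : ∀ θ ∈ Set.Ioo (0 : ℝ) (π / 2), 0 < τ θ + τ'' θ)
    (a b : ℝ) (ha : 0 < a) (hb : 0 < b)
    (g : ℝ → ℝ → ℝ)
    (hg : ∀ θ y : ℝ, g θ y = τ θ * y / Real.sin θ + τbd * (1 / 2 - y / Real.tan θ)) :
    ∀ θ₁ ∈ Set.Ioo (0 : ℝ) (π / 2), ∀ θ₂ ∈ Set.Ioo (0 : ℝ) (π / 2),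
      g θ₁ a + g θ₂ b ≥ g θY a + g θY b ∧
        (g θ₁ a + g θ₂ b = g θY a + g θY b ↔ θ₁ = θY ∧ θ₂ = θY) := by
  have key := herring_key τ τ' τ'' τbd hd1 hd2 θY hθY hHY hstiff
  have hgf : ∀ θ ∈ Set.Ioo (0 : ℝ) (π / 2), ∀ y : ℝ,
      g θ y = y * ((τ θ - τbd * Real.cos θ) / Real.sin θ) + τbd / 2 := by
    intro θ hθ y
    have hs : 0 < Real.sin θ :=
      Real.sin_pos_of_pos_of_lt_pi hθ.1 (lt_trans hθ.2 (by linarith [Real.pi_pos]))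
    have hcs : 0 < Real.cos θ :=
      Real.cos_pos_of_mem_Ioo ⟨by linarith [hθ.1, Real.pi_pos], hθ.2⟩
    rw [hg, Real.tan_eq_sin_div_cos]
    field_simp
    ring
  -- strict single-variable fact
  have hsingle : ∀ θ ∈ Set.Ioo (0 : ℝ) (π / 2), ∀ y : ℝ, 0 < y → θ ≠ θY →
      g θY y < g θ y := by
    intro θ hθ y hy hne
    rw [hgf θ hθ y, hgf θY hθY y]
    have := key θ hθ hne
    nlinarith
  intro θ₁ h1 θ₂ h2
  have hge1 : g θY a ≤ g θ₁ a := by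
    rcases eq_or_ne θ₁ θY with rfl | hne
    · exact le_refl _
    · exact (hsingle θ₁ h1 a ha hne).le
  have hge2 : g θY b ≤ g θ₂ b := by
    rcases eq_or_ne θ₂ θY with rfl | hne
    · exact le_refl _
    · exact (hsingle θ₂ h2 b hb hne).le
  refine ⟨by linarith, ?_, ?_⟩
  · intro heq
    constructor
    · by_contra hne
      have := hsingle θ₁ h1 a ha hne
      linarith
    · by_contra hne
      have := hsingle θ₂ h2 b hb hne
      linarith
  · rintro ⟨rfl, rfl⟩
    rfl
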